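/- Let f : ℝ → ℂ and let F₀, F₁, F₂, F₃ : ℝ → ℝ≥0 be nonnegative integrable functions with I_j := ∫_ℝ F_j(τ) dτ > 0 for each j, such that for all z ∈ ℝ, f(z) = ∫_ℝ (F₀(ξ) − F₁(ξ) + i·F₂(ξ) − i·F₃(ξ)) · exp(2πiξz) dξ. For each j let p_j(ξ) = F_j(ξ)/I_j (a probability density), and let P̄_j be a probability measure on ℝ with a density p̄_j that is strictly positive wherever p_j is positive. Set c₀ = I₀, c₁ = −I₁, c₂ = i·I₂, c₃ = −i·I₃. Then for all z ∈ ℝ, f(z) = Σ_{j=0}^{3} c_j · 𝔼_{ξ∼P̄_j}[(p_j(ξ)/p̄_j(ξ)) · exp(2πiξz)], and each integrand is P̄_j-integrable. -/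

import Mathlib

open MeasureTheory Real
open scoped ENNReal

theorem stmt_11 (f : ℝ → ℂ) (F : Fin 4 → ℝ → ℝ)
    (hFnn : ∀ j ξ, 0 ≤ F j ξ) (hFint : ∀ j, Integrable (F j))
    (I : Fin 4 → ℝ) (hI : ∀ j, I j = ∫ ξ, F j ξ) (hIpos : ∀ j, 0 < I j)
    -- Fourier inversion representation of `f`
    (hinv : ∀ z : ℝ,
      f z = ∫ ξ : ℝ,
        (((F 0 ξ - F 1 ξ : ℝ) : ℂ) + Complex.I * ((F 2 ξ : ℝ) : ℂ)
            - Complex.I * ((F 3 ξ : ℝ) : ℂ)) *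
          Complex.exp (2 * π * Complex.I * ξ * z))
    -- proposal densities
    (pbar : Fin 4 → ℝ → ℝ) (hpbar_nn : ∀ j ξ, 0 ≤ pbar j ξ)
    (hpbar_meas : ∀ j, Measurable (pbar j))
    (hpbar_prob : ∀ j, ∫ ξ, pbar j ξ = 1)
    (hpos : ∀ j ξ, 0 < F j ξ / I j → 0 < pbar j ξ)
    (c : Fin 4 → ℂ)
    (hc0 : c 0 = ((I 0 : ℝ) : ℂ)) (hc1 : c 1 = -((I 1 : ℝ) : ℂ))
    (hc2 : c 2 = Complex.I * ((I 2 : ℝ) : ℂ))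
    (hc3 : c 3 = -(Complex.I * ((I 3 : ℝ) : ℂ))) :
    ∀ z : ℝ,
      (f z = ∑ j, c j *
          ∫ ξ, (((F j ξ / I j) / pbar j ξ : ℝ) : ℂ) *
              Complex.exp (2 * π * Complex.I * ξ * z)
            ∂((volume : Measure ℝ).withDensity fun ξ => ENNReal.ofReal (pbar j ξ))) ∧
        ∀ j, Integrable
          (fun ξ : ℝ => (((F j ξ / I j) / pbar j ξ : ℝ) : ℂ) *
            Complex.exp (2 * π * Complex.I * ξ * z))
          ((volume : Measure ℝ).withDensity fun ξ => ENNReal.ofReal (pbar j ξ)) := by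
  intro z
  set e : ℝ → ℂ := fun ξ => Complex.exp (2 * π * Complex.I * ξ * z) with he
  have hnorm : ∀ ξ : ℝ, ‖e ξ‖ = 1 := by
    intro ξ
    simp only [he, Complex.norm_exp]
    have : (2 * (π : ℂ) * Complex.I * ξ * z).re = 0 := by
      simp [Complex.mul_re, Complex.mul_im]
    rw [this, Real.exp_zero]
  have hecont : Continuous e := by
    apply Complex.continuous_exp.comp
    continuity
  -- smul identity
  have key : ∀ j, (fun ξ : ℝ => (pbar j ξ).toNNReal • ((((F j ξ / I j) / pbar j ξ : ℝ) : ℂ) * e ξ))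
      = fun ξ : ℝ => ((F j ξ / I j : ℝ) : ℂ) * e ξ := by
    intro j
    funext ξ
    rcases eq_or_lt_of_le (hpbar_nn j ξ) with h0 | h0
    · have hF0 : F j ξ / I j = 0 := by
        by_contra h
        have : 0 < F j ξ / I j :=
          lt_of_le_of_ne (div_nonneg (hFnn j ξ) (hIpos j).le) (Ne.symm h)
        exact absurd (hpos j ξ this) (by rw [← h0]; exact lt_irrefl 0)
      simp [← h0, hF0]
    · rw [NNReal.smul_def, Complex.real_smul, Real.coe_toNNReal _ (hpbar_nn j ξ),
        ← mul_assoc, ← Complex.ofReal_mul]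
      congr 2
      field_simp
  -- integrability of F j * e
  have hFe_int : ∀ j, Integrable (fun ξ : ℝ => ((F j ξ : ℝ) : ℂ) * e ξ) := by
    intro j
    refine (hFint j).mono' ?_ ?_
    · exact (Complex.continuous_ofReal.comp_aestronglyMeasurable
        (hFint j).aestronglyMeasurable).mul hecont.aestronglyMeasurable
    · filter_upwards with ξ
      rw [norm_mul, hnorm, mul_one, Complex.norm_real, Real.norm_eq_abs,
        abs_of_nonneg (hFnn j ξ)]
  have hg_int : ∀ j, Integrable (fun ξ : ℝ => ((F j ξ / I j : ℝ) : ℂ) * e ξ) := by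
    intro j
    have : (fun ξ : ℝ => ((F j ξ / I j : ℝ) : ℂ) * e ξ)
        = fun ξ : ℝ => ((I j : ℝ) : ℂ)⁻¹ * (((F j ξ : ℝ) : ℂ) * e ξ) := by
      funext ξ; push_cast; ring
    rw [this]
    exact (hFe_int j).const_mul _
  have hmeas : ∀ j, Measurable fun ξ : ℝ => (pbar j ξ).toNNReal :=
    fun j => (hpbar_meas j).real_toNNReal
  have hwd : ∀ j, ((volume : Measure ℝ).withDensity fun ξ => ENNReal.ofReal (pbar j ξ))
      = (volume : Measure ℝ).withDensity fun ξ => ((pbar j ξ).toNNReal : ℝ≥0∞) := by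
    intro j; rfl
  constructor
  · -- integral computation
    have hint_eq : ∀ j, (∫ ξ, (((F j ξ / I j) / pbar j ξ : ℝ) : ℂ) * e ξ
        ∂((volume : Measure ℝ).withDensity fun ξ => ENNReal.ofReal (pbar j ξ)))
        = ((I j : ℝ) : ℂ)⁻¹ * ∫ ξ, ((F j ξ : ℝ) : ℂ) * e ξ := by
      intro j
      rw [hwd j, integral_withDensity_eq_integral_smul (hmeas j)]
      simp only [key j]
      rw [← integral_const_mul _]
      congr 1; funext ξ; push_cast; ring
    show f z = ∑ j, c j * ∫ ξ, (((F j ξ / I j) / pbar j ξ : ℝ) : ℂ) * e ξ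
        ∂((volume : Measure ℝ).withDensity fun ξ => ENNReal.ofReal (pbar j ξ))
    rw [Fin.sum_univ_four]
    simp only [hint_eq]
    rw [hc0, hc1, hc2, hc3]
    have hI0 : ∀ j, ((I j : ℝ) : ℂ) ≠ 0 := fun j =>
      Complex.ofReal_ne_zero.mpr (hIpos j).ne'
    have e1 : ((I 0 : ℝ) : ℂ) * (((I 0 : ℝ) : ℂ)⁻¹ * ∫ ξ, ((F 0 ξ : ℝ) : ℂ) * e ξ)
        = ∫ ξ, ((F 0 ξ : ℝ) : ℂ) * e ξ := by
      rw [← mul_assoc, mul_inv_cancel₀ (hI0 0), one_mul]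
    have e2 : -((I 1 : ℝ) : ℂ) * (((I 1 : ℝ) : ℂ)⁻¹ * ∫ ξ, ((F 1 ξ : ℝ) : ℂ) * e ξ)
        = -∫ ξ, ((F 1 ξ : ℝ) : ℂ) * e ξ := by
      rw [neg_mul, ← mul_assoc, mul_inv_cancel₀ (hI0 1), one_mul]
    have e3 : Complex.I * ((I 2 : ℝ) : ℂ) * (((I 2 : ℝ) : ℂ)⁻¹ * ∫ ξ, ((F 2 ξ : ℝ) : ℂ) * e ξ)
        = Complex.I * ∫ ξ, ((F 2 ξ : ℝ) : ℂ) * e ξ := by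
      rw [mul_assoc, ← mul_assoc ((I 2:ℝ):ℂ), mul_inv_cancel₀ (hI0 2), one_mul]
    have e4 : -(Complex.I * ((I 3 : ℝ) : ℂ)) * (((I 3 : ℝ) : ℂ)⁻¹ * ∫ ξ, ((F 3 ξ : ℝ) : ℂ) * e ξ)
        = -(Complex.I * ∫ ξ, ((F 3 ξ : ℝ) : ℂ) * e ξ) := by
      rw [neg_mul, mul_assoc, ← mul_assoc ((I 3:ℝ):ℂ), mul_inv_cancel₀ (hI0 3), one_mul]
    rw [e1, e2, e3, e4]
    have hsplit : f z = (∫ ξ, ((F 0 ξ : ℝ) : ℂ) * e ξ) - (∫ ξ, ((F 1 ξ : ℝ) : ℂ) * e ξ)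
        + Complex.I * (∫ ξ, ((F 2 ξ : ℝ) : ℂ) * e ξ)
        - Complex.I * (∫ ξ, ((F 3 ξ : ℝ) : ℂ) * e ξ) := by
      rw [hinv z]
      show (∫ ξ : ℝ, (((F 0 ξ - F 1 ξ : ℝ) : ℂ) + Complex.I * ((F 2 ξ : ℝ) : ℂ)
          - Complex.I * ((F 3 ξ : ℝ) : ℂ)) * e ξ) = _
      have heq : ∀ ξ : ℝ, (((F 0 ξ - F 1 ξ : ℝ) : ℂ) + Complex.I * ((F 2 ξ : ℝ) : ℂ)
          - Complex.I * ((F 3 ξ : ℝ) : ℂ)) * e ξ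
          = ((F 0 ξ : ℝ) : ℂ) * e ξ - ((F 1 ξ : ℝ) : ℂ) * e ξ
            + Complex.I * (((F 2 ξ : ℝ) : ℂ) * e ξ)
            - Complex.I * (((F 3 ξ : ℝ) : ℂ) * e ξ) := by
        intro ξ; push_cast; ring
      simp only [heq]
      have i01 : Integrable (fun ξ : ℝ => ((F 0 ξ : ℝ) : ℂ) * e ξ - ((F 1 ξ : ℝ) : ℂ) * e ξ) :=
        (hFe_int 0).sub (hFe_int 1)
      have i2 : Integrable (fun ξ : ℝ => Complex.I * (((F 2 ξ : ℝ) : ℂ) * e ξ)) :=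
        (hFe_int 2).const_mul _
      have i3 : Integrable (fun ξ : ℝ => Complex.I * (((F 3 ξ : ℝ) : ℂ) * e ξ)) :=
        (hFe_int 3).const_mul _
      have i012 : Integrable (fun ξ : ℝ => ((F 0 ξ : ℝ) : ℂ) * e ξ - ((F 1 ξ : ℝ) : ℂ) * e ξ
          + Complex.I * (((F 2 ξ : ℝ) : ℂ) * e ξ)) := i01.add i2
      rw [integral_sub i012 i3, integral_add i01 i2, integral_sub (hFe_int 0) (hFe_int 1),
        integral_const_mul _, integral_const_mul _]
    rw [hsplit]; ring
  · intro j
    show Integrable (fun ξ : ℝ => (((F j ξ / I j) / pbar j ξ : ℝ) : ℂ) * e ξ) _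
    rw [hwd j, integrable_withDensity_iff_integrable_smul (hmeas j)]
    simpa only [key j] using hg_int j
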